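/- The topological entropy of the full tent map T restricted to [0,1] (as a self-map of the compact metric space [0,1]) equals log 2. -/

import Mathlib

open Set

/-- The full tent map `T x = 1 - |2x - 1|`, restricted to a self-map of the compact
metric space `[0,1]`. -/
noncomputable def tentMapRestricted : Icc (0 : ℝ) 1 → Icc (0 : ℝ) 1 := fun x =>
  ⟨1 - |2 * (x : ℝ) - 1|, by
    obtain ⟨x, hx0, hx1⟩ := x
    constructor
    · simp only
      rw [sub_nonneg, abs_le]
      constructor <;> linarith
    · simp only
      have := abs_nonneg (2 * x - 1)
      linarith⟩

noncomputable def tent (x : ℝ) : ℝ := 1 - |2 * x - 1|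

lemma tent_left {x : ℝ} (h : x ≤ 1/2) : tent x = 2 * x := by
  rw [tent, abs_of_nonpos (by linarith)]; ring

lemma tent_right {x : ℝ} (h : 1/2 ≤ x) : tent x = 2 - 2 * x := by
  rw [tent, abs_of_nonneg (by linarith)]; ring

lemma tent_lipschitz (x y : ℝ) : |tent x - tent y| ≤ 2 * |x - y| := by
  have h : tent x - tent y = |2*y - 1| - |2*x-1| := by rw [tent, tent]; ring
  rw [h]
  calc |(|2*y-1| - |2*x-1|)| ≤ |(2*y-1) - (2*x-1)| := abs_abs_sub_abs_le_abs_sub _ _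
    _ = 2 * |x - y| := by rw [← abs_neg, show -((2*y-1)-(2*x-1)) = 2*(x-y) by ring,
          abs_mul, abs_two]

lemma tent_iter_lipschitz (n : ℕ) (x y : ℝ) : |tent^[n] x - tent^[n] y| ≤ 2^n * |x - y| := by
  induction n generalizing x y with
  | zero => simp
  | succ n ih =>
    rw [Function.iterate_succ_apply]
    calc |tent^[n] (tent x) - tent^[n] (tent y)| ≤ 2^n * |tent x - tent y| := ih _ _
      _ ≤ 2^n * (2 * |x - y|) := by
          have := tent_lipschitz x y
          have : (0:ℝ) < 2^n := by positivity
          nlinarith [tent_lipschitz x y]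
      _ = 2^(n+1) * |x - y| := by ring

/-- preimage selector: `pre m k y` is the point in the `k`-th branch of `tent^[m]`
mapping to `y`. -/
noncomputable def pre (m k : ℕ) (y : ℝ) : ℝ :=
  if Even k then ((k : ℝ) + y) / 2^m else ((k : ℝ) + 1 - y) / 2^m

lemma pre_mem {m k : ℕ} (hk : k < 2^m) {y : ℝ} (hy : y ∈ Icc (0:ℝ) 1) :
    pre m k y ∈ Icc ((k:ℝ)/2^m) (((k:ℝ)+1)/2^m) := by
  obtain ⟨h0, h1⟩ := hy
  have h2 : (0:ℝ) < 2^m := by positivity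
  rw [pre]
  split <;> constructor <;> (apply div_le_div_of_nonneg_right ?_ h2.le <;> try linarith) <;> linarith

lemma tent_iter_pre (m : ℕ) : ∀ k, k < 2^m → ∀ y ∈ Icc (0:ℝ) 1, tent^[m] (pre m k y) = y := by
  induction m with
  | zero =>
    intro k hk y hy
    interval_cases k
    simp [pre]
  | succ m ih =>
    intro k hk y hy
    obtain ⟨h0, h1⟩ := hy
    have h2 : (0:ℝ) < 2^m := by positivity
    have hstep : tent (pre (m+1) k y) = pre m (if k < 2^m then k else 2^(m+1) - k - 1) y := by
      have h2m : (0:ℝ) < 2^(m+1) := by positivity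
      rcases lt_or_ge k (2^m) with hkm | hkm
      · rw [if_pos hkm]
        have hk1 : (k:ℝ) + 1 ≤ 2^m := by exact_mod_cast Nat.succ_le_of_lt hkm
        have hx : pre (m+1) k y ≤ 1/2 := by
          rw [pre]; split <;>
            (rw [div_le_iff₀ h2m, pow_succ]; nlinarith)
        rw [tent_left hx, pre, pre]
        split <;> (rw [pow_succ]; field_simp)
      · rw [if_neg (not_lt.mpr hkm)]
        have hk2 : (2^m : ℝ) ≤ k := by exact_mod_cast hkm
        have hx : 1/2 ≤ pre (m+1) k y := by
          rw [pre]; split <;>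
            (rw [le_div_iff₀ h2m, pow_succ]; nlinarith)
        have hkle : k + 1 ≤ 2^(m+1) := hk
        have hcast : ((2^(m+1) - k - 1 : ℕ) : ℝ) = 2^(m+1) - (k:ℝ) - 1 := by
          push_cast [Nat.cast_sub (by omega : k ≤ 2^(m+1)), Nat.cast_sub (by omega : 1 ≤ 2^(m+1) - k)]
          ring
        have hpow : (2:ℕ)^(m+1) = 2 * 2^m := by ring
        rw [tent_right hx, pre, pre]
        by_cases he : Even k
        · have ho : ¬ Even (2^(m+1) - k - 1) := by
            rw [Nat.even_sub (by omega), Nat.even_sub (by omega)]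
            simp [he, Nat.even_pow]
          rw [if_pos he, if_neg ho, hcast]
          push_cast
          rw [pow_succ]
          field_simp
          ring
        · have ho : Even (2^(m+1) - k - 1) := by
            rw [Nat.even_sub (by omega), Nat.even_sub (by omega)]
            simp [he, Nat.even_pow, parity_simps]
          rw [if_neg he, if_pos ho, hcast]
          push_cast
          rw [pow_succ]
          field_simp
          ring
    rw [Function.iterate_succ_apply, hstep]
    split
    · exact ih k (by assumption) y ⟨h0, h1⟩
    · apply ih _ _ y ⟨h0, h1⟩
      omega
    

/-- Point with prescribed symbolic itinerary for `tent^[M+2]`. -/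
noncomputable def wordPt (m : ℕ) : List ℕ → ℝ
  | [] => 1/2
  | k :: w => pre m k (wordPt m w)

def GoodWord (M : ℕ) (w : List ℕ) : Prop := ∀ k ∈ w, 2^M ≤ k ∧ k < 3 * 2^M

lemma pre_mem' {M k : ℕ} {y : ℝ} (hk1 : 2^M ≤ k) (hk2 : k < 3 * 2^M)
    (hy : y ∈ Icc (1/4 : ℝ) (3/4)) :
    pre (M+2) k y ∈ Icc (((k:ℝ) + 1/4)/2^(M+2)) (((k:ℝ) + 3/4)/2^(M+2)) := by
  obtain ⟨h0, h1⟩ := hy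
  have h2 : (0:ℝ) < 2^(M+2) := by positivity
  rw [pre]
  split <;> constructor <;> (apply div_le_div_of_nonneg_right ?_ h2.le) <;> linarith

lemma pre_mem'' {M k : ℕ} {y : ℝ} (hk1 : 2^M ≤ k) (hk2 : k < 3 * 2^M)
    (hy : y ∈ Icc (1/4 : ℝ) (3/4)) :
    pre (M+2) k y ∈ Icc (1/4 : ℝ) (3/4) := by
  obtain ⟨h0, h1⟩ := pre_mem' hk1 hk2 hy
  have hk1' : (2:ℝ)^M ≤ (k:ℝ) := by exact_mod_cast hk1
  have hk2' : (k:ℝ) + 1 ≤ 3 * 2^M := by exact_mod_cast hk2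
  have h2 : (0:ℝ) < 2^(M+2) := by positivity
  have hp : (2:ℝ)^(M+2) = 4 * 2^M := by ring
  constructor
  · apply le_trans ?_ h0
    rw [le_div_iff₀ h2, hp]; linarith
  · apply le_trans h1
    rw [div_le_iff₀ h2, hp]; linarith

lemma wordPt_mem {M : ℕ} : ∀ {w : List ℕ}, GoodWord M w → wordPt (M+2) w ∈ Icc (1/4 : ℝ) (3/4)
  | [], _ => by norm_num [wordPt]
  | k :: w, h => by
    have hk := h k List.mem_cons_self
    exact pre_mem'' hk.1 hk.2 (wordPt_mem (fun j hj => h j (List.mem_cons_of_mem k hj)))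

lemma pre_separated {M k k' : ℕ} {y y' : ℝ} (hk1 : 2^M ≤ k) (hk2 : k < 3 * 2^M)
    (hk1' : 2^M ≤ k') (hk2' : k' < 3 * 2^M) (hne : k ≠ k')
    (hy : y ∈ Icc (1/4 : ℝ) (3/4)) (hy' : y' ∈ Icc (1/4 : ℝ) (3/4)) :
    1/2^(M+3) ≤ |pre (M+2) k y - pre (M+2) k' y'| := by
  have h := pre_mem' hk1 hk2 hy
  have h' := pre_mem' hk1' hk2' hy'
  have h2 : (0:ℝ) < 2^(M+2) := by positivity
  have hp : (2:ℝ)^(M+3) = 2^(M+2) * 2 := by ring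
  have half : (1:ℝ)/2^(M+3) = (1/2)/2^(M+2) := by rw [hp]; ring
  rcases lt_or_gt_of_ne hne with hlt | hlt
  · have hc : (k:ℝ) + 1 ≤ (k':ℝ) := by exact_mod_cast hlt
    have key : ((k:ℝ) + 3/4)/2^(M+2) + (1/2)/2^(M+2) ≤ ((k':ℝ) + 1/4)/2^(M+2) := by
      rw [← add_div]
      apply div_le_div_of_nonneg_right ?_ h2.le
      linarith
    rw [le_abs]
    right
    have := h.2; have := h'.1
    rw [half]
    linarith
  · have hc : (k':ℝ) + 1 ≤ (k:ℝ) := by exact_mod_cast hlt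
    have key : ((k':ℝ) + 3/4)/2^(M+2) + (1/2)/2^(M+2) ≤ ((k:ℝ) + 1/4)/2^(M+2) := by
      rw [← add_div]
      apply div_le_div_of_nonneg_right ?_ h2.le
      linarith
    rw [le_abs]
    left
    have := h.1; have := h'.2
    rw [half]
    linarith

lemma tent_iter_wordPt {M : ℕ} {k : ℕ} {w : List ℕ} (h : GoodWord M (k :: w)) :
    tent^[M+2] (wordPt (M+2) (k :: w)) = wordPt (M+2) w := by
  have hk := h k List.mem_cons_self
  have hw : GoodWord M w := fun j hj => h j (List.mem_cons_of_mem k hj)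
  have hmem := wordPt_mem hw
  apply tent_iter_pre (M+2) k ?_ _ ⟨by linarith [hmem.1], by linarith [hmem.2]⟩
  calc k < 3 * 2^M := hk.2
    _ ≤ 2^(M+2) := by rw [pow_add]; omega

lemma goodWord_tail {M k : ℕ} {w : List ℕ} (h : GoodWord M (k :: w)) : GoodWord M w :=
  fun j hj => h j (List.mem_cons_of_mem k hj)

lemma wordPt_separated {M : ℕ} : ∀ (u v : List ℕ), GoodWord M u → GoodWord M v →
    u.length = v.length → u ≠ v →
    ∃ i < u.length, 1/2^(M+3) ≤
      |tent^[(M+2)*i] (wordPt (M+2) u) - tent^[(M+2)*i] (wordPt (M+2) v)| := by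
  intro u
  induction u with
  | nil =>
    intro v _ _ hlen hne
    exact absurd (List.length_eq_zero_iff.mp hlen.symm).symm hne
  | cons a u ih =>
    intro v hgu hgv hlen hne
    match v with
    | [] => simp at hlen
    | b :: v =>
      by_cases hab : a = b
      · subst hab
        have hne' : u ≠ v := fun h => hne (by rw [h])
        obtain ⟨i, hi, hsep⟩ := ih v (goodWord_tail hgu) (goodWord_tail hgv)
          (by simpa using hlen) hne'
        refine ⟨i + 1, by simpa using Nat.succ_lt_succ hi, ?_⟩
        have e1 : (M+2) * (i+1) = (M+2)*i + (M+2) := by ring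
        rw [e1, Function.iterate_add_apply tent ((M+2)*i) (M+2),
          Function.iterate_add_apply tent ((M+2)*i) (M+2),
          tent_iter_wordPt hgu, tent_iter_wordPt hgv]
        exact hsep
      · refine ⟨0, Nat.succ_pos _, ?_⟩
        simp only [Nat.mul_zero, Function.iterate_zero, id_eq]
        have ha := hgu a List.mem_cons_self
        have hb := hgv b List.mem_cons_self
        exact pre_separated ha.1 ha.2 hb.1 hb.2 hab
          (wordPt_mem (goodWord_tail hgu)) (wordPt_mem (goodWord_tail hgv))

lemma tent_iter_mul_wordPt {M : ℕ} : ∀ (i : ℕ) (w : List ℕ), GoodWord M w → i ≤ w.length →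
    tent^[(M+2)*i] (wordPt (M+2) w) = wordPt (M+2) (w.drop i) := by
  intro i
  induction i with
  | zero => simp
  | succ i ih =>
    intro w hg hlen
    match w with
    | [] => simp at hlen
    | k :: w =>
      have e1 : (M+2) * (i+1) = (M+2)*i + (M+2) := by ring
      rw [e1, Function.iterate_add_apply tent ((M+2)*i) (M+2), tent_iter_wordPt hg, List.drop_succ_cons]
      exact ih w (goodWord_tail hg) (by simpa using hlen)

lemma coe_tentIter (n : ℕ) (p : Icc (0:ℝ) 1) :
    ((tentMapRestricted^[n] p : Icc (0:ℝ) 1) : ℝ) = tent^[n] (p:ℝ) := by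
  induction n with
  | zero => rfl
  | succ n ih =>
    rw [Function.iterate_succ_apply', Function.iterate_succ_apply', ← ih]
    rfl

open Dynamics ENNReal EReal Filter

set_option maxHeartbeats 2000000 in
lemma tent_upper : coverEntropy tentMapRestricted Set.univ ≤ (Real.log 2 : EReal) := by
  apply iSup₂_le
  intro U hU
  obtain ⟨ε, hε, hsub⟩ := Metric.mem_uniformity_dist.mp hU
  set V : Set (Icc (0:ℝ) 1 × Icc (0:ℝ) 1) := {p | dist p.1 p.2 < ε} with hV
  have hVU : V ⊆ U := fun p hp => hsub hp
  apply le_trans (coverEntropyEntourage_antitone tentMapRestricted Set.univ hVU)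
  -- choose C
  obtain ⟨C, hC⟩ := exists_nat_one_div_lt hε
  have hC1 : (1:ℝ)/(C+1) < ε := hC
  -- mincard bound
  have key : ∀ n : ℕ, coverMincard tentMapRestricted Set.univ V n ≤ (((C+1) * 2^n + 1 : ℕ) : ℕ∞) := by
    intro n
    set N : ℕ := (C+1) * 2^n with hN
    have hNpos : 0 < N := by positivity
    have hNR : (0:ℝ) < N := by exact_mod_cast hNpos
    set f : ℕ → Icc (0:ℝ) 1 := fun i =>
      ⟨min ((i:ℝ)/N) 1, ⟨le_min (by positivity) zero_le_one, min_le_right _ _⟩⟩ with hf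
    have hcover : IsDynCoverOf tentMapRestricted Set.univ V n ((Finset.range (N+1)).image f) := by
      intro x _
      set i : ℕ := ⌊(x:ℝ) * N⌋₊ with hi
      have hx0 : (0:ℝ) ≤ (x:ℝ) := x.2.1
      have hx1 : (x:ℝ) ≤ 1 := x.2.2
      have hiN : i ≤ N := by
        rw [hi]
        apply Nat.floor_le_of_le
        nlinarith
      have hfloor : (i:ℝ) ≤ (x:ℝ) * N := Nat.floor_le (by positivity)
      have hfloor2 : (x:ℝ) * N < (i:ℝ) + 1 := Nat.lt_floor_add_one _
      have hdist : |(x:ℝ) - (i:ℝ)/N| ≤ 1/N := by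
        rw [abs_le]
        constructor
        · have h1 : (i:ℝ)/N ≤ (x:ℝ) := by
            rw [div_le_iff₀ hNR]; nlinarith
          have h2 : (0:ℝ) < 1/N := by positivity
          linarith
        · have : (x:ℝ) ≤ (i:ℝ)/N + 1/N := by
            rw [← add_div, le_div_iff₀ hNR]; nlinarith
          linarith
      have hmin : ((f i : Icc (0:ℝ) 1) : ℝ) = (i:ℝ)/N := by
        rw [hf]
        simp only
        rw [min_eq_left]
        rw [div_le_one hNR]
        exact_mod_cast hiN
      refine ⟨f i, ?_, ?_⟩
      · simp only [Finset.coe_image, Set.mem_image, Finset.mem_coe, Finset.mem_range]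
        exact ⟨i, by omega, rfl⟩
      · show f i ∈ UniformSpace.ball x (dynEntourage tentMapRestricted V n)
        rw [mem_ball_dynEntourage]
        intro k hk
        show dist (tentMapRestricted^[k] x) (tentMapRestricted^[k] (f i)) < ε
        rw [dist_comm]
        rw [Subtype.dist_eq, Real.dist_eq, coe_tentIter, coe_tentIter]
        calc |tent^[k] ((f i : Icc (0:ℝ) 1) : ℝ) - tent^[k] (x:ℝ)|
            ≤ 2^k * |((f i : Icc (0:ℝ) 1) : ℝ) - (x:ℝ)| := tent_iter_lipschitz k _ _
          _ ≤ 2^k * (1/N) := by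
              have := hdist
              rw [abs_sub_comm] at this
              rw [hmin]
              have h2k : (0:ℝ) ≤ 2^k := by positivity
              exact mul_le_mul_of_nonneg_left this h2k
          _ < ε := by
              rw [hN]
              push_cast
              rw [mul_one_div, div_lt_iff₀ (by positivity)]
              have h2k2n : (2:ℝ)^k ≤ 2^n := by
                apply pow_le_pow_right₀ (by norm_num) (le_of_lt hk)
              calc (2:ℝ)^k ≤ 2^n := h2k2n
                _ = (1/(C+1)) * ((C+1) * 2^n) := by field_simp
                _ < ε * ((C+1) * 2^n) := by
                    apply mul_lt_mul_of_pos_right hC1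
                    positivity
    calc coverMincard tentMapRestricted Set.univ V n
        ≤ ((Finset.range (N+1)).image f).card := hcover.coverMincard_le_card
      _ ≤ ((N + 1 : ℕ) : ℕ∞) := by
          have h := Finset.card_image_le (s := Finset.range (N+1)) (f := f)
          rw [Finset.card_range] at h
          exact_mod_cast h
  -- now bound the limsup
  set r : ℕ → ℝ := fun n => Real.log (2*(C+1)) / n + Real.log 2 with hr
  have hbound : ∀ n : ℕ, 1 ≤ n →
      log (coverMincard tentMapRestricted Set.univ V n) / (n : EReal) ≤ ((r n : ℝ) : EReal) := by
    intro n hn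
    have h1 : coverMincard tentMapRestricted Set.univ V n ≤ ((2*(C+1) * 2^n : ℕ) : ℕ∞) := by
      refine le_trans (key n) ?_
      have : (C+1) * 2^n + 1 ≤ 2*(C+1) * 2^n := by
        have : 1 ≤ 2^n := Nat.one_le_two_pow
        nlinarith
      exact_mod_cast this
    have h2 : log (coverMincard tentMapRestricted Set.univ V n)
        ≤ ((Real.log (2*(↑C+1) * 2^n) : ℝ) : EReal) := by
      apply le_trans (log_monotone (ENat.toENNReal_le.mpr h1))
      rw [ENat.toENNReal_coe, ← ENNReal.ofReal_natCast,
        ENNReal.log_ofReal_of_pos (Nat.cast_pos.mpr (by positivity))]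
      apply EReal.coe_le_coe_iff.mpr
      apply le_of_eq
      congr 1
      push_cast
      ring
    have hn0 : (n:ℝ) ≠ 0 := by positivity
    calc log (coverMincard tentMapRestricted Set.univ V n) / (n:EReal)
        ≤ ((Real.log (2*(↑C+1) * 2^n) : ℝ):EReal) / (n:EReal) :=
          div_le_div_right_of_nonneg (Nat.cast_nonneg' n) h2
      _ = ((Real.log (2*(↑C+1) * 2^n) / n : ℝ) : EReal) := by
          rw [← EReal.coe_coe_eq_natCast, ← EReal.coe_div]
      _ ≤ ((r n : ℝ) : EReal) := by
          apply EReal.coe_le_coe_iff.mpr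
          rw [hr]
          simp only
          rw [Real.log_mul (by positivity) (by positivity), Real.log_pow, add_div]
          have : ((n:ℝ) * Real.log 2)/n = Real.log 2 := by field_simp
          push_cast
          rw [this]
  have hle : (fun n : ℕ => log (coverMincard tentMapRestricted Set.univ V n) / (n:EReal)) ≤ᶠ[atTop]
      (fun n : ℕ => ((r n : ℝ) : EReal)) := eventually_atTop.mpr ⟨1, hbound⟩
  apply le_trans (limsup_le_limsup hle)
  have htend : Tendsto (fun n : ℕ => ((r n : ℝ) : EReal)) atTop
      (nhds ((Real.log 2 : ℝ) : EReal)) := by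
    have h0 : Tendsto r atTop (nhds (0 + Real.log 2)) :=
      (tendsto_const_div_atTop_nhds_zero_nat (Real.log (2*(↑C+1)))).add_const (Real.log 2)
    rw [zero_add] at h0
    exact (continuous_coe_real_ereal.tendsto _).comp h0
  rw [htend.limsup_eq]

noncomputable def clampI (x : ℝ) : Icc (0:ℝ) 1 :=
  ⟨max 0 (min x 1), le_max_left _ _, max_le zero_le_one (min_le_right _ _)⟩

lemma clampI_coe {x : ℝ} (h : x ∈ Icc (0:ℝ) 1) : (clampI x : ℝ) = x := by
  rw [clampI]
  simp only
  rw [min_eq_left h.2, max_eq_right h.1]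

lemma icc_quarter {x : ℝ} (h : x ∈ Icc (1/4:ℝ) (3/4)) : x ∈ Icc (0:ℝ) 1 :=
  ⟨by linarith [h.1], by linarith [h.2]⟩

lemma goodWord_ofFn {M q : ℕ} {w : Fin q → ℕ}
    (hw : w ∈ Fintype.piFinset (fun _ : Fin q => Finset.Ico (2^M) (3*2^M))) :
    GoodWord M (List.ofFn w) := by
  intro k hk
  rw [List.mem_ofFn] at hk
  obtain ⟨i, rfl⟩ := hk
  have := Fintype.mem_piFinset.mp hw i
  rw [Finset.mem_Ico] at this
  exact this

set_option maxHeartbeats 1000000 in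
lemma tent_lower_aux (M : ℕ) :
    ((((M:ℝ)+1) * Real.log 2 / ((M:ℝ)+2) : ℝ) : EReal)
      ≤ coverEntropy tentMapRestricted Set.univ := by
  set δ : ℝ := 1/2^(M+3) with hδ
  have hδpos : 0 < δ := by positivity
  set U : Set (Icc (0:ℝ) 1 × Icc (0:ℝ) 1) := {p | dist p.1 p.2 < δ/2} with hU
  have hUuni : U ∈ uniformity (Icc (0:ℝ) 1) := Metric.dist_mem_uniformity (by positivity)
  set A : Finset ℕ := Finset.Ico (2^M) (3*2^M) with hA
  have hAcard : A.card = 2^(M+1) := by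
    rw [hA, Nat.card_Ico]
    have : 2^(M+1) = 2*2^M := by ring
    omega
  -- the key counting bound
  have key : ∀ q : ℕ, ((2^((M+1)*q) : ℕ) : ℕ∞)
      ≤ netMaxcard tentMapRestricted Set.univ U ((M+2)*q) := by
    intro q
    set words : Finset (Fin q → ℕ) := Fintype.piFinset (fun _ => A) with hwords
    set g : (Fin q → ℕ) → Icc (0:ℝ) 1 := fun w => clampI (wordPt (M+2) (List.ofFn w)) with hg
    have hcoe : ∀ w ∈ words, ((g w : Icc (0:ℝ) 1) : ℝ) = wordPt (M+2) (List.ofFn w) := by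
      intro w hw
      exact clampI_coe (icc_quarter (wordPt_mem (goodWord_ofFn hw)))
    -- separation of distinct images
    have hsepa : ∀ w ∈ words, ∀ w' ∈ words, w ≠ w' →
        ∃ i < q, δ ≤ |tent^[(M+2)*i] ((g w : Icc (0:ℝ) 1) : ℝ)
          - tent^[(M+2)*i] ((g w' : Icc (0:ℝ) 1) : ℝ)| := by
      intro w hw w' hw' hne
      have hlne : List.ofFn w ≠ List.ofFn w' := by
        intro h
        exact hne (List.ofFn_injective h)
      obtain ⟨i, hi, hs⟩ := wordPt_separated (List.ofFn w) (List.ofFn w')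
        (goodWord_ofFn hw) (goodWord_ofFn hw') (by simp) hlne
      rw [List.length_ofFn] at hi
      refine ⟨i, hi, ?_⟩
      rw [hcoe w hw, hcoe w' hw']
      exact hs
    have hinj : Set.InjOn g words := by
      intro w hw w' hw' heq
      by_contra hne
      obtain ⟨i, hi, hs⟩ := hsepa w hw w' hw' hne
      rw [heq] at hs
      simp at hs
      linarith
    set s : Finset (Icc (0:ℝ) 1) := words.image g with hs
    have hnet : IsDynNetIn tentMapRestricted Set.univ U ((M+2)*q) ↑s := by
      constructor
      · exact Set.subset_univ _
      · intro p hp p' hp' hne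
        simp only [hs, Finset.coe_image, Set.mem_image, Finset.mem_coe] at hp hp'
        obtain ⟨w, hw, rfl⟩ := hp
        obtain ⟨w', hw', rfl⟩ := hp'
        have hwne : w ≠ w' := fun h => hne (by rw [h])
        obtain ⟨i, hi, hsep⟩ := hsepa w hw w' hw' hwne
        rw [Function.onFun]
        rw [Set.disjoint_left]
        intro z hz hz'
        rw [mem_ball_dynEntourage] at hz hz'
        set k := (M+2)*i with hk
        have hkn : k < (M+2)*q := by
          have : 0 < M + 2 := by omega
          exact (Nat.mul_lt_mul_left this).mpr hi
        have h1 := hz k hkn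
        have h2 := hz' k hkn
        rw [UniformSpace.ball, Set.mem_preimage] at h1 h2
        have d1 : dist (tentMapRestricted^[k] (g w)) (tentMapRestricted^[k] z) < δ/2 := h1
        have d2 : dist (tentMapRestricted^[k] (g w')) (tentMapRestricted^[k] z) < δ/2 := h2
        have dd : dist (tentMapRestricted^[k] (g w)) (tentMapRestricted^[k] (g w')) < δ := by
          calc dist (tentMapRestricted^[k] (g w)) (tentMapRestricted^[k] (g w'))
              ≤ dist (tentMapRestricted^[k] (g w)) (tentMapRestricted^[k] z)
                + dist (tentMapRestricted^[k] z) (tentMapRestricted^[k] (g w')) :=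
                dist_triangle _ _ _
            _ < δ/2 + δ/2 := by rw [dist_comm (tentMapRestricted^[k] z)] at *; linarith
            _ = δ := by ring
        rw [Subtype.dist_eq, Real.dist_eq, coe_tentIter, coe_tentIter] at dd
        linarith [hsep, dd]
    have hcard : s.card = 2^((M+1)*q) := by
      rw [hs, Finset.card_image_of_injOn hinj, hwords, Fintype.card_piFinset]
      simp [hAcard]
      rw [← pow_mul, mul_comm]
    have := hnet.card_le_netMaxcard
    rw [hcard] at this
    exact this
  -- from counting to entropy
  have hfreq : ∃ᶠ n in Filter.atTop, ((((M:ℝ)+1) * Real.log 2 / ((M:ℝ)+2) : ℝ) : EReal)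
      ≤ log (netMaxcard tentMapRestricted Set.univ U n) / (n : EReal) := by
    rw [Filter.frequently_atTop]
    intro N
    set q := N + 1 with hq
    refine ⟨(M+2)*q, by nlinarith [Nat.le_refl N], ?_⟩
    have hcard := key q
    have h2 : (((((M:ℝ)+1)*q) * Real.log 2 : ℝ) : EReal)
        ≤ log (netMaxcard tentMapRestricted Set.univ U ((M+2)*q)) := by
      apply le_trans ?_ (log_monotone (ENat.toENNReal_le.mpr hcard))
      rw [ENat.toENNReal_coe]
      rw [show ((2^((M+1)*q) : ℕ) : ℝ≥0∞) = (2 : ℝ≥0∞)^((M+1)*q) by push_cast; ring]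
      rw [ENNReal.log_pow]
      rw [show (2 : ℝ≥0∞) = ENNReal.ofReal (2:ℝ) by norm_num]
      rw [ENNReal.log_ofReal_of_pos (by norm_num)]
      apply le_of_eq
      rw [← EReal.coe_coe_eq_natCast, ← EReal.coe_mul]
      congr 1
      push_cast
      ring
    calc ((((M:ℝ)+1) * Real.log 2 / ((M:ℝ)+2) : ℝ) : EReal)
        = (((((M:ℝ)+1)*q) * Real.log 2 / (((M:ℝ)+2)*q) : ℝ) : EReal) := by
          congr 1
          have hq0 : (q:ℝ) ≠ 0 := by positivity
          field_simp
      _ = (((((M:ℝ)+1)*q) * Real.log 2 : ℝ) : EReal) / ((((M+2)*q : ℕ) : ℕ) : EReal) := by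
          rw [← EReal.coe_coe_eq_natCast, ← EReal.coe_div]
          congr 2
          push_cast
          ring
      _ ≤ log (netMaxcard tentMapRestricted Set.univ U ((M+2)*q)) / (((M+2)*q : ℕ) : EReal) :=
          div_le_div_right_of_nonneg (Nat.cast_nonneg' _) h2
  have hnetU : ((((M:ℝ)+1) * Real.log 2 / ((M:ℝ)+2) : ℝ) : EReal)
      ≤ netEntropyEntourage tentMapRestricted Set.univ U :=
    Filter.le_limsup_of_frequently_le' hfreq
  exact hnetU.trans (netEntropyEntourage_le_coverEntropy tentMapRestricted Set.univ hUuni)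

lemma tent_lower : (Real.log 2 : EReal) ≤ coverEntropy tentMapRestricted Set.univ := by
  have ht : Tendsto (fun M : ℕ => ((((M:ℝ)+1) * Real.log 2 / ((M:ℝ)+2) : ℝ) : EReal)) atTop
      (nhds ((Real.log 2 : ℝ) : EReal)) := by
    apply (continuous_coe_real_ereal.tendsto _).comp
    have h1 : Tendsto (fun M : ℕ => ((M:ℝ)+2)) atTop atTop :=
      tendsto_atTop_add_const_right _ 2 tendsto_natCast_atTop_atTop
    have h2 : Tendsto (fun M : ℕ => Real.log 2 / ((M:ℝ)+2)) atTop (nhds 0) :=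
      Tendsto.div_atTop tendsto_const_nhds h1
    have h3 : Tendsto (fun M : ℕ => Real.log 2 - Real.log 2/((M:ℝ)+2)) atTop
        (nhds (Real.log 2 - 0)) := tendsto_const_nhds.sub h2
    rw [sub_zero] at h3
    convert h3 using 2 with M
    have hM : ((M:ℝ)+2) ≠ 0 := by positivity
    field_simp
    ring
  exact le_of_tendsto' ht tent_lower_aux


/-- The topological entropy (Bowen–Dinaburg entropy via covers, for the metric uniformity
on `[0,1]`) of the full tent map on `[0,1]` is `log 2`. -/
theorem tent_map_coverEntropy :
    Dynamics.coverEntropy tentMapRestricted Set.univ = (Real.log 2 : EReal) :=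
  le_antisymm tent_upper tent_lower
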